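/- Let f be an n-variable nonzero Boolean function with support D. Then the all-ones vector 1_{wt(f)} is not in (RM(e',n)^{D̄})^⊥ if and only if deg(f) ≥ n − e'. -/
import Mathlib


open scoped BigOperators

abbrev BF (n : ℕ) := (Fin n → ZMod 2) → ZMod 2

/-- Algebraic degree of a Boolean function: the least `d` such that `f` is
represented by a multivariate polynomial of total degree at most `d`. -/
noncomputable def degB {n : ℕ} (f : BF n) : ℕ :=
  sInf {d | ∃ p : MvPolynomial (Fin n) (ZMod 2),
    (∀ x, MvPolynomial.eval x p = f x) ∧ p.totalDegree ≤ d}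

/-- Fast algebraic immunity. -/
noncomputable def FAI {n : ℕ} (f : BF n) : ℕ :=
  sInf {m | ∃ g : BF n, g ≠ 1 ∧ f * g ≠ 0 ∧ m = degB g + degB (f * g)}

/-- Minimum degree of a nonzero annihilator. -/
noncomputable def LDA {n : ℕ} (f : BF n) : ℕ :=
  sInf {m | ∃ g : BF n, g ≠ 0 ∧ f * g = 0 ∧ m = degB g}

noncomputable def AI {n : ℕ} (f : BF n) : ℕ := min (LDA f) (LDA (1 + f))

noncomputable def muk {n : ℕ} (k : ℕ) (f : BF n) : ℕ :=
  sInf {m | ∃ g : BF n, degB g ≤ k ∧ f * g ≠ 0 ∧ m = degB (f * g)}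

def wtB {n : ℕ} (f : BF n) : ℕ := (Finset.univ.filter (fun x => f x = 1)).card

def IsAffineAut {n : ℕ} (A : (Fin n → ZMod 2) → (Fin n → ZMod 2)) : Prop :=
  ∃ (L : (Fin n → ZMod 2) ≃ₗ[ZMod 2] (Fin n → ZMod 2)) (b : Fin n → ZMod 2),
    ∀ x, A x = L x + b

noncomputable def RMcode (n e : ℕ) :
    Submodule (ZMod 2) ((Fin n → ZMod 2) → ZMod 2) :=
  Submodule.span (ZMod 2) {f | ∃ p : MvPolynomial (Fin n) (ZMod 2),
    p.totalDegree ≤ e ∧ ∀ x, MvPolynomial.eval x p = f x}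

/-- The code obtained by keeping only the coordinates in `S`
(i.e. puncturing on the complement of `S`). -/
noncomputable def restrictCode {n : ℕ}
    (C : Submodule (ZMod 2) ((Fin n → ZMod 2) → ZMod 2))
    (S : Set (Fin n → ZMod 2)) : Submodule (ZMod 2) (S → ZMod 2) :=
  C.map (LinearMap.funLeft (ZMod 2) (ZMod 2) (Subtype.val : S → (Fin n → ZMod 2)))

noncomputable def dualCode {ι : Type*} [Fintype ι]
    (C : Submodule (ZMod 2) (ι → ZMod 2)) : Submodule (ZMod 2) (ι → ZMod 2) where
  carrier := {w | ∀ c ∈ C, ∑ i, w i * c i = 0}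
  add_mem' := by
    intro a b ha hb c hc
    simp only [Pi.add_apply, add_mul, Finset.sum_add_distrib, ha c hc, hb c hc, add_zero]
  zero_mem' := by intro c hc; simp
  smul_mem' := by
    intro r a ha c hc
    simp only [Pi.smul_apply, smul_eq_mul, mul_assoc, ← Finset.mul_sum, ha c hc, mul_zero]

noncomputable instance instFintypeSubsetBF {α : Type*} [Fintype α] (S : Set α) :
    Fintype ↥S := Fintype.ofFinite _

def suppB {n : ℕ} (f : BF n) : Set (Fin n → ZMod 2) := {x | f x = 1}


section Aux

open MvPolynomial Finset

variable {n : ℕ}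

private lemma zmod2_cases (a : ZMod 2) : a = 0 ∨ a = 1 := by revert a; decide

private lemma sum_prod_pow (k : Fin n → ℕ) :
    ∑ x : Fin n → ZMod 2, ∏ i, (x i) ^ (k i) = if ∀ i, k i ≠ 0 then 1 else 0 := by
  classical
  have hps := Finset.prod_univ_sum (fun _ : Fin n => (Finset.univ : Finset (ZMod 2)))
    (fun i a => a ^ k i)
  rw [← Fintype.piFinset_univ, ← hps]
  have key : ∀ i : Fin n, (∑ a ∈ (Finset.univ : Finset (ZMod 2)), a ^ k i)
      = if k i = 0 then 0 else 1 := by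
    intro i
    have huniv : (Finset.univ : Finset (ZMod 2)) = {0, 1} := by decide
    rw [huniv, Finset.sum_insert (by decide), Finset.sum_singleton, one_pow]
    rcases Nat.eq_zero_or_pos (k i) with h | h
    · rw [h, pow_zero, if_pos rfl]; decide
    · rw [zero_pow (Nat.pos_iff_ne_zero.mp h), if_neg (Nat.pos_iff_ne_zero.mp h), zero_add]
  rw [Finset.prod_congr rfl fun i _ => key i]
  by_cases h : ∀ i, k i ≠ 0
  · rw [if_pos h, Finset.prod_congr rfl fun i _ => if_neg (h i), Finset.prod_const_one]
  · rw [if_neg h]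
    push_neg at h; obtain ⟨i, hi⟩ := h
    exact Finset.prod_eq_zero (Finset.mem_univ i) (by simp [hi])

/-- eval with product over univ -/
private lemma eval_eq_univ (x : Fin n → ZMod 2) (p : MvPolynomial (Fin n) (ZMod 2)) :
    MvPolynomial.eval x p = ∑ m ∈ p.support, p.coeff m * ∏ i, x i ^ m i :=
  MvPolynomial.eval_eq' x p

/-- Lemma A: a polynomial of total degree < n sums to zero over the cube. -/
private lemma sum_eval_eq_zero {p : MvPolynomial (Fin n) (ZMod 2)}
    (h : p.totalDegree < n) : ∑ x : Fin n → ZMod 2, MvPolynomial.eval x p = 0 := by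
  classical
  simp only [eval_eq_univ]
  rw [Finset.sum_comm]
  refine Finset.sum_eq_zero fun m hm => ?_
  rw [← Finset.mul_sum, sum_prod_pow]
  have : ¬ ∀ i, m i ≠ 0 := by
    intro hall
    have hsupp : m.support = Finset.univ := by
      ext i; simp [Finsupp.mem_support_iff, hall i]
    have h1 : (m.sum fun _ e => e) ≥ n := by
      rw [Finsupp.sum, hsupp]
      calc n = ∑ _i : Fin n, 1 := by simp
        _ ≤ ∑ i : Fin n, m i := Finset.sum_le_sum fun i _ =>
            Nat.one_le_iff_ne_zero.mpr (hall i)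
    exact absurd (le_trans h1 (MvPolynomial.le_totalDegree hm)) (Nat.not_le.mpr h)
  rw [if_neg this, mul_zero]

private lemma exists_rep (f : BF n) :
    ∃ p : MvPolynomial (Fin n) (ZMod 2), ∀ x, MvPolynomial.eval x p = f x := by
  classical
  refine ⟨∑ a ∈ Finset.univ.filter (fun a => f a = 1), MvPolynomial.indicator a, fun x => ?_⟩
  rw [map_sum]
  rcases zmod2_cases (f x) with h | h
  · rw [h]
    refine Finset.sum_eq_zero fun a ha => ?_
    have hax : x ≠ a := by
      rintro rfl; rw [(Finset.mem_filter.mp ha).2] at h; exact absurd h (by decide)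
    exact MvPolynomial.eval_indicator_apply_eq_zero x a hax
  · rw [h, Finset.sum_eq_single_of_mem x (by simp [h])
      (fun a ha hax => MvPolynomial.eval_indicator_apply_eq_zero x a hax.symm)]
    exact MvPolynomial.eval_indicator_apply_eq_one x

private lemma degB_le_iff {f : BF n} {d : ℕ} :
    degB f ≤ d ↔ ∃ p : MvPolynomial (Fin n) (ZMod 2),
      (∀ x, MvPolynomial.eval x p = f x) ∧ p.totalDegree ≤ d := by
  constructor
  · intro h
    obtain ⟨p, hp⟩ := exists_rep f
    have hne : {d | ∃ p : MvPolynomial (Fin n) (ZMod 2),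
        (∀ x, MvPolynomial.eval x p = f x) ∧ p.totalDegree ≤ d}.Nonempty :=
      ⟨p.totalDegree, p, hp, le_rfl⟩
    obtain ⟨q, hq, hqd⟩ := Nat.sInf_mem hne
    exact ⟨q, hq, le_trans hqd h⟩
  · rintro ⟨p, hp, hpd⟩
    exact Nat.sInf_le ⟨p, hp, hpd⟩

/-- exponent reduction -/
private noncomputable def redE (m : Fin n →₀ ℕ) : Fin n →₀ ℕ :=
  Finsupp.mapRange (fun k => min k 1) (by simp) m

private lemma redE_apply (m : Fin n →₀ ℕ) (i : Fin n) : redE m i = min (m i) 1 := rfl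

private lemma pow_min (a : ZMod 2) (k : ℕ) : a ^ min k 1 = a ^ k := by
  rcases k with _ | k
  · rfl
  · have h1 : min (k + 1) 1 = 1 := min_eq_right (Nat.succ_le_succ (Nat.zero_le k))
    rw [h1, pow_one]
    rcases zmod2_cases a with rfl | rfl
    · rw [zero_pow (Nat.succ_ne_zero k)]
    · rw [one_pow]

/-- Every boolean function has a multilinear representative of minimal degree. -/
private lemma exists_multilinear_rep (f : BF n) :
    ∃ q : MvPolynomial (Fin n) (ZMod 2),
      (∀ x, MvPolynomial.eval x q = f x) ∧ q.totalDegree ≤ degB f ∧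
      ∀ m ∈ q.support, ∀ i, m i ≤ 1 := by
  classical
  obtain ⟨p, hp, hpd⟩ := degB_le_iff.mp (le_refl (degB f))
  refine ⟨∑ m ∈ p.support, MvPolynomial.monomial (redE m) (p.coeff m), ?_, ?_, ?_⟩
  · intro x
    rw [map_sum, ← hp x, eval_eq_univ]
    refine Finset.sum_congr rfl fun m _ => ?_
    rw [MvPolynomial.eval_monomial, Finsupp.prod_pow]
    congr 1
    exact Finset.prod_congr rfl fun i _ => pow_min (x i) (m i)
  · refine le_trans (MvPolynomial.totalDegree_finset_sum _ _) (Finset.sup_le fun m hm => ?_)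
    refine le_trans (MvPolynomial.totalDegree_monomial_le _ _) (le_trans ?_
      (le_trans (MvPolynomial.le_totalDegree hm) hpd))
    rw [Finsupp.sum, Finsupp.sum]
    calc ∑ i ∈ (redE m).support, redE m i
        ≤ ∑ i ∈ (redE m).support, m i :=
          Finset.sum_le_sum fun i _ => min_le_left _ _
      _ ≤ ∑ i ∈ m.support, m i := Finset.sum_le_sum_of_subset_of_nonneg
          (Finsupp.support_mapRange) (fun _ _ _ => Nat.zero_le _)
  · intro m hm i
    have := MvPolynomial.support_sum hm
    obtain ⟨m0, _, hm0⟩ := Finset.mem_biUnion.mp this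
    have := MvPolynomial.support_monomial_subset hm0
    rw [Finset.mem_singleton] at this
    subst this
    rw [redE_apply]
    exact min_le_right _ _

private lemma sum_supp_eq (f : BF n) (h : (Fin n → ZMod 2) → ZMod 2) :
    ∑ x : ↥(suppB f), h x.val = ∑ x : Fin n → ZMod 2, f x * h x := by
  classical
  have : ∀ x : Fin n → ZMod 2, f x * h x = if x ∈ suppB f then h x else 0 := by
    intro x
    rcases zmod2_cases (f x) with hx | hx
    · rw [hx, zero_mul, if_neg]
      intro hmem
      rw [show f x = 1 from hmem] at hx
      exact one_ne_zero hx
    · rw [hx, one_mul, if_pos (show x ∈ suppB f from hx)]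
  have h2 : ∑ x : Fin n → ZMod 2, f x * h x
      = ∑ x ∈ Finset.univ.filter (· ∈ suppB f), h x := by
    rw [Finset.sum_filter]; exact Finset.sum_congr rfl fun x _ => this x
  rw [h2]
  exact (Finset.sum_subtype _ (fun x => by simp) h).symm

end Aux

theorem stmt15 {n : ℕ} (e' : ℕ) (f : BF n) (hf : f ≠ 0) :
    (fun _ => 1 : ↥(suppB f) → ZMod 2) ∉
        dualCode (restrictCode (RMcode n e') (suppB f)) ↔
      n - e' ≤ degB f := by
  classical
  constructor
  · intro hnot
    by_contra hd
    push_neg at hd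
    apply hnot
    show ∀ c ∈ restrictCode (RMcode n e') (suppB f),
      ∑ i : ↥(suppB f), (1 : ZMod 2) * c i = 0
    intro c hc
    simp only [one_mul]
    obtain ⟨h, hhC, rfl⟩ := hc
    have hres : (∑ i : ↥(suppB f), (LinearMap.funLeft (ZMod 2) (ZMod 2)
        (Subtype.val : ↥(suppB f) → (Fin n → ZMod 2)) h) i)
        = ∑ x : Fin n → ZMod 2, f x * h x := sum_supp_eq f h
    rw [hres]
    obtain ⟨pf, hpf, hpfd⟩ := degB_le_iff.mp (le_refl (degB f))
    refine Submodule.span_induction (p := fun h _ => ∑ x : Fin n → ZMod 2, f x * h x = 0)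
      ?_ ?_ ?_ ?_ hhC
    · rintro g ⟨p, hpd, hpe⟩
      have he : ∀ x, f x * g x = MvPolynomial.eval x (pf * p) := by
        intro x
        rw [map_mul, hpf x, hpe x]
      rw [Finset.sum_congr rfl fun x _ => he x]
      refine sum_eval_eq_zero ?_
      have := MvPolynomial.totalDegree_mul pf p
      omega
    · simp
    · intro a b _ _ ha hb
      simp only [Pi.add_apply, mul_add, Finset.sum_add_distrib, ha, hb, add_zero]
    · intro r a _ ha
      simp only [Pi.smul_apply, smul_eq_mul, mul_left_comm, ← Finset.mul_sum, ha, mul_zero]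
  · intro hd hdual
    obtain ⟨q, hq, hqd, hml⟩ := exists_multilinear_rep f
    have hdq : degB f ≤ q.totalDegree := Nat.sInf_le ⟨q, hq, le_rfl⟩
    have hqd' : q.totalDegree = degB f := le_antisymm hqd hdq
    have hq0 : q ≠ 0 := by
      intro h0
      apply hf
      funext x
      rw [show (0 : BF n) x = 0 from rfl, ← hq x, h0, map_zero]
    obtain ⟨m, hm, hmd⟩ := Finset.exists_mem_eq_sup q.support
      (MvPolynomial.support_nonempty.mpr hq0) (fun m => m.sum fun _ e => e)
    have hmdeg : (m.sum fun _ e => e) = degB f := by rw [← hqd']; exact hmd.symm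
    set S := m.support with hS
    have hcard1 : ∀ m' : Fin n →₀ ℕ, (∀ i, m' i ≤ 1) →
        (m'.sum fun _ e => e) = m'.support.card := by
      intro m' hm'
      rw [Finsupp.sum, Finset.card_eq_sum_ones]
      refine Finset.sum_congr rfl fun i hi => ?_
      have h1 := hm' i
      have h2 := Finsupp.mem_support_iff.mp hi
      omega
    have hcardS : S.card = degB f := by
      rw [← hmdeg, hcard1 m (hml m hm)]
    have hdn : degB f ≤ n := by
      rw [← hcardS]
      exact le_trans (Finset.card_le_univ S) (by simp)
    set g : BF n := fun x => ∏ i ∈ Sᶜ, x i with hg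
    have hgRM : g ∈ RMcode n e' := by
      refine Submodule.subset_span ⟨∏ i ∈ Sᶜ, MvPolynomial.X i, ?_, ?_⟩
      · refine le_trans (MvPolynomial.totalDegree_finset_prod _ _) ?_
        have : ∑ i ∈ Sᶜ, (MvPolynomial.X i : MvPolynomial (Fin n) (ZMod 2)).totalDegree
            = Sᶜ.card := by
          rw [Finset.sum_congr rfl fun i _ => MvPolynomial.totalDegree_X i]
          simp
        rw [this, Finset.card_compl]
        simp only [Fintype.card_fin, hcardS]
        omega
      · intro x
        rw [map_prod]
        exact Finset.prod_congr rfl fun i _ => MvPolynomial.eval_X i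
    have hcmem : (LinearMap.funLeft (ZMod 2) (ZMod 2)
        (Subtype.val : ↥(suppB f) → (Fin n → ZMod 2)) g)
        ∈ restrictCode (RMcode n e') (suppB f) := Submodule.mem_map_of_mem hgRM
    have hzero := hdual _ hcmem
    simp only [one_mul, LinearMap.funLeft_apply] at hzero
    rw [sum_supp_eq f g] at hzero
    -- now compute the sum
    have hgx : ∀ x : Fin n → ZMod 2, g x = ∏ i, x i ^ (if i ∈ Sᶜ then 1 else 0) := by
      intro x
      rw [hg]
      have : ∀ i : Fin n, x i ^ (if i ∈ Sᶜ then 1 else 0)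
          = if i ∈ Sᶜ then x i else 1 := by
        intro i; by_cases hi : i ∈ Sᶜ <;> simp [hi]
      rw [Finset.prod_congr rfl fun i _ => this i, Finset.prod_ite_mem,
        Finset.univ_inter]
    have key : ∀ x : Fin n → ZMod 2, f x * g x
        = ∑ m' ∈ q.support, q.coeff m'
            * ∏ i, x i ^ (m' i + (if i ∈ Sᶜ then 1 else 0)) := by
      intro x
      rw [← hq x, eval_eq_univ, Finset.sum_mul]
      refine Finset.sum_congr rfl fun m' _ => ?_
      rw [mul_assoc]
      congr 1
      rw [hgx x, ← Finset.prod_mul_distrib]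
      exact Finset.prod_congr rfl fun i _ => (pow_add (x i) (m' i) _).symm
    have hiff : ∀ m' ∈ q.support,
        ((∀ i, m' i + (if i ∈ Sᶜ then 1 else 0) ≠ 0) ↔ m' = m) := by
      intro m' hm'
      constructor
      · intro hall
        have hsub : S ⊆ m'.support := by
          intro i hi
          have : i ∉ Sᶜ := by simp [hi]
          have := hall i
          rw [if_neg ‹i ∉ Sᶜ›] at this
          exact Finsupp.mem_support_iff.mpr (by omega)
        have hle : m'.support.card ≤ S.card := by
          rw [hcardS, ← hcard1 m' (hml m' hm')]
          rw [← hqd']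
          exact MvPolynomial.le_totalDegree hm'
        have hSeq : m'.support = S := (Finset.eq_of_subset_of_card_le hsub hle).symm
        ext i
        by_cases hi : i ∈ S
        · have h1 : m' i ≠ 0 := Finsupp.mem_support_iff.mp (hSeq ▸ hi)
          have h2 : m i ≠ 0 := Finsupp.mem_support_iff.mp hi
          have := hml m' hm' i
          have := hml m hm i
          omega
        · have h1 : m' i = 0 := Finsupp.notMem_support_iff.mp (by rw [hSeq]; exact hi)
          have h2 : m i = 0 := Finsupp.notMem_support_iff.mp hi
          omega
      · rintro rfl
        intro i
        by_cases hi : i ∈ Sᶜ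
        · rw [if_pos hi]; omega
        · rw [if_neg hi]
          have : i ∈ S := by simpa using hi
          have := Finsupp.mem_support_iff.mp this
          simpa using this
    have hsum : ∑ x : Fin n → ZMod 2, f x * g x = q.coeff m := by
      rw [Finset.sum_congr rfl fun x _ => key x, Finset.sum_comm]
      have step : ∀ m' ∈ q.support,
          (∑ x : Fin n → ZMod 2, q.coeff m'
            * ∏ i, x i ^ (m' i + (if i ∈ Sᶜ then 1 else 0)))
          = if m' = m then q.coeff m' else 0 := by
        intro m' hm'
        rw [← Finset.mul_sum, sum_prod_pow]
        by_cases hc : m' = m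
        · rw [if_pos ((hiff m' hm').mpr hc), if_pos hc, mul_one]
        · rw [if_neg (fun hall => hc ((hiff m' hm').mp hall)), if_neg hc, mul_zero]
      rw [Finset.sum_congr rfl step, Finset.sum_ite_eq' q.support m q.coeff, if_pos hm]
    rw [hsum] at hzero
    exact MvPolynomial.mem_support_iff.mp hm hzero
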